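/- Let G be a finite group, N ⊴ G with G/N abelian, ψ : N → ℂˣ a G-invariant homomorphism with non-degenerate commutator pairing D_ψ on G/N. Then the dimension of the unique irreducible representation of G lying over ψ equals the square root of [G : N]; in particular [G : N] is a perfect square. -/

import Mathlib

open Module

open CategoryTheory in
theorem FDRep.simple_of_irreducible {G : Type} [Group G] (V : FDRep ℂ G) (hnt : Nontrivial V)
    (hirr : ∀ U : Submodule ℂ V, (∀ (g : G) (v : V), v ∈ U → V.ρ g v ∈ U) → U = ⊥ ∨ U = ⊤) :
    Simple V := by
  constructor
  intro X f hmono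
  constructor
  · intro hiso h0
    obtain ⟨x, y, hxy⟩ := hnt
    have hf0 : f.hom = 0 := by rw [h0]; rfl
    have h2 := congrArg Action.Hom.hom (IsIso.inv_hom_id f)
    rw [Action.comp_hom, hf0, Limits.comp_zero, Action.id_hom] at h2
    have h1 : ∀ w : V, w = 0 := by
      intro w
      have h3 := congrArg (fun (u : V.V ⟶ V.V) => u w) h2
      exact h3.symm
    exact hxy ((h1 x).trans (h1 y).symm)
  · intro hne
    have happ : ∀ (g : G) (w : X.V), f.hom.hom.hom (X.ρ g w) = V.ρ g (f.hom.hom.hom w) := by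
      intro g w
      exact congrArg (fun (u : X.V ⟶ V.V) => u w) (f.comm g)
    have hK : ∀ (g : G) (w : X.V), w ∈ LinearMap.ker f.hom.hom.hom →
        X.ρ g w ∈ LinearMap.ker f.hom.hom.hom := by
      intro g w hw
      simp only [LinearMap.mem_ker] at hw ⊢
      exact (happ g w).trans (by rw [hw, map_zero])
    let ρK : Representation ℂ G (LinearMap.ker f.hom.hom.hom) :=
      { toFun := fun g => (X.ρ g).restrict (hK g)
        map_one' := by
          refine LinearMap.ext fun x => Subtype.ext ?_
          simp [LinearMap.restrict_apply]
        map_mul' := by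
          intro a b
          apply LinearMap.ext
          intro x
          apply Subtype.ext
          show X.ρ (a * b) x.1 = X.ρ a (X.ρ b x.1)
          rw [map_mul]
          rfl }
    let KV : FDRep ℂ G := FDRep.of ρK
    let ι : KV ⟶ X :=
      { hom := FGModuleCat.ofHom (LinearMap.ker f.hom.hom.hom).subtype
        comm := fun g => by ext x; rfl }
    have hι0 : ι ≫ f = 0 := by
      apply Action.hom_ext
      apply FGModuleCat.hom_ext
      apply LinearMap.ext
      intro x
      exact x.2
    have hι : ι = 0 := (cancel_mono f).mp (by rw [hι0, Limits.zero_comp])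
    have hinj : Function.Injective f.hom := by
      rw [← LinearMap.ker_eq_bot, Submodule.eq_bot_iff]
      intro w hw
      have h := congrArg (fun (u : KV ⟶ X) => u.hom ⟨w, hw⟩) hι
      exact h
    have hfne : (f.hom : X.V ⟶ V.V) ≠ 0 := by
      intro h0
      exact hne (Action.hom_ext f 0 h0)
    have hRinv : ∀ (g : G) (v : V), v ∈ LinearMap.range f.hom.hom.hom →
        V.ρ g v ∈ LinearMap.range f.hom.hom.hom := by
      rintro g v ⟨w, rfl⟩
      exact ⟨X.ρ g w, happ g w⟩
    have hR : LinearMap.range f.hom.hom.hom = ⊤ := by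
      refine (hirr (LinearMap.range f.hom.hom.hom) hRinv).resolve_left ?_
      intro h
      exact hfne (FGModuleCat.hom_ext (LinearMap.range_eq_bot.mp h))
    have hbij : Function.Bijective f.hom := ⟨hinj, LinearMap.range_eq_top.mp hR⟩
    let e := LinearEquiv.ofBijective (f.hom.hom.hom : X.V →ₗ[ℂ] V.V) hbij
    have : IsIso (f.hom : X.V ⟶ V.V) := by
      refine ⟨FGModuleCat.ofHom e.symm.toLinearMap, ?_, ?_⟩
      · apply FGModuleCat.hom_ext; apply LinearMap.ext; intro x; exact e.symm_apply_apply x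
      · apply FGModuleCat.hom_ext; apply LinearMap.ext; intro x; exact e.apply_symm_apply x
    infer_instance


/-- With `D_ψ` non-degenerate on `G/N`, any irreducible representation of `G`
lying over `ψ` has dimension `√[G:N]`; in particular `[G:N]` is a perfect square. -/
theorem dim_sq_eq_index_of_irreducible_over_character {G : Type} [Group G] [Fintype G]
    (N : Subgroup G) [N.Normal]
    (hcomm : ∀ x y : G, x * y * x⁻¹ * y⁻¹ ∈ N)
    (ψ : N →* ℂˣ)
    (hinv : ∀ (g n : G) (hn : n ∈ N) (hg : g * n * g⁻¹ ∈ N),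
      ψ ⟨g * n * g⁻¹, hg⟩ = ψ ⟨n, hn⟩)
    (hnd : ∀ x : G, (∀ y : G, ψ ⟨x * y * x⁻¹ * y⁻¹, hcomm x y⟩ = 1) → x ∈ N) :
    ∀ V : FDRep ℂ G, Nontrivial V →
      (∀ U : Submodule ℂ V, (∀ (g : G) (v : V), v ∈ U → V.ρ g v ∈ U) → U = ⊥ ∨ U = ⊤) →
      (∃ v : V, v ≠ 0 ∧ ∀ (n : G) (hn : n ∈ N),
        V.ρ n v = ((ψ ⟨n, hn⟩ : ℂˣ) : ℂ) • v) →
      (finrank ℂ V) ^ 2 = N.index ∧ IsSquare N.index := by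
  intro V hV hirr hex
  obtain ⟨v, hv, hvψ⟩ := hex
  classical
  -- Step 1: N acts by the scalar ψ on all of V
  let W : Submodule ℂ V :=
    { carrier := {w | ∀ (n : G) (hn : n ∈ N), V.ρ n w = ((ψ ⟨n, hn⟩ : ℂˣ) : ℂ) • w}
      add_mem' := by
        intro a b ha hb n hn
        rw [map_add, ha n hn, hb n hn, smul_add]
      zero_mem' := by
        intro n hn
        rw [map_zero, smul_zero]
      smul_mem' := by
        intro c a ha n hn
        rw [map_smul, ha n hn, smul_comm] }
  have hWinv : ∀ (g : G) (w : V), w ∈ W → V.ρ g w ∈ W := by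
    intro g w hw n hn
    have hm : g⁻¹ * n * g ∈ N := by
      have := Subgroup.Normal.conj_mem ‹N.Normal› n hn g⁻¹
      simpa using this
    have hψ : ψ ⟨g⁻¹ * n * g, hm⟩ = ψ ⟨n, hn⟩ := by
      have := hinv g⁻¹ n hn (by simpa using hm)
      simpa using this
    have h1 : V.ρ n (V.ρ g w) = V.ρ g (V.ρ (g⁻¹ * n * g) w) := by
      rw [show V.ρ n (V.ρ g w) = V.ρ (n * g) w by rw [map_mul]; rfl,
        show (n * g) = g * (g⁻¹ * n * g) by group, map_mul]
      rfl
    rw [h1, hw _ hm, map_smul, hψ]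
  have hWtop : W = ⊤ := by
    refine (hirr W hWinv).resolve_left ?_
    intro h
    exact hv (by simpa [h] using (show v ∈ W from fun n hn => hvψ n hn))
  have hscal : ∀ (w : V) (n : G) (hn : n ∈ N), V.ρ n w = ((ψ ⟨n, hn⟩ : ℂˣ) : ℂ) • w := by
    intro w n hn
    exact (show w ∈ W from hWtop ▸ Submodule.mem_top) n hn
  have hend : ∀ (n : G) (hn : n ∈ N),
      V.ρ n = ((ψ ⟨n, hn⟩ : ℂˣ) : ℂ) • (1 : V →ₗ[ℂ] V) := by
    intro n hn
    apply LinearMap.ext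
    intro w
    rw [hscal w n hn]
    rfl
  -- characters
  have hcharN : ∀ (n : G) (hn : n ∈ N),
      V.character n = ((ψ ⟨n, hn⟩ : ℂˣ) : ℂ) * (finrank ℂ V) := by
    intro n hn
    unfold FDRep.character
    rw [hend n hn, map_smul, LinearMap.trace_one]
    rfl
  have hmul : ∀ (n g : G) (hn : n ∈ N),
      V.character (n * g) = ((ψ ⟨n, hn⟩ : ℂˣ) : ℂ) * V.character g := by
    intro n g hn
    unfold FDRep.character
    rw [map_mul, hend n hn, smul_mul_assoc, one_mul, map_smul]
    rfl
  have hvanish : ∀ g : G, g ∉ N → V.character g = 0 := by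
    intro g hg
    have hexy : ¬ ∀ y : G, ψ ⟨g * y * g⁻¹ * y⁻¹, hcomm g y⟩ = 1 := fun h => hg (hnd g h)
    push_neg at hexy
    obtain ⟨y, hy⟩ := hexy
    have hc : y * g * y⁻¹ * g⁻¹ ∈ N := hcomm y g
    have hcinv : (⟨y * g * y⁻¹ * g⁻¹, hc⟩ : N) = (⟨g * y * g⁻¹ * y⁻¹, hcomm g y⟩ : N)⁻¹ := by
      apply Subtype.ext
      show y * g * y⁻¹ * g⁻¹ = (g * y * g⁻¹ * y⁻¹)⁻¹
      group
    have hψc : ψ ⟨y * g * y⁻¹ * g⁻¹, hc⟩ ≠ 1 := by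
      rw [hcinv, map_inv]
      intro h
      exact hy (by rwa [inv_eq_one] at h)
    have h1 : V.character g = ((ψ ⟨y * g * y⁻¹ * g⁻¹, hc⟩ : ℂˣ) : ℂ) * V.character g := by
      conv_lhs => rw [← FDRep.char_conj V g y,
        show y * g * y⁻¹ = (y * g * y⁻¹ * g⁻¹) * g by group]
      exact hmul _ g hc
    by_contra h0
    apply hψc
    apply Units.ext
    have := mul_right_cancel₀ h0 (h1.symm.trans (one_mul (V.character g)).symm)
    simpa using this
  -- orthogonality
  haveI hS : CategoryTheory.Simple V := FDRep.simple_of_irreducible V hV hirr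
  letI : Fintype G := ‹Fintype G›
  letI : Invertible ((Fintype.card G : ℂ)) :=
    invertibleOfNonzero (Nat.cast_ne_zero.mpr Fintype.card_ne_zero)
  have horth := FDRep.char_orthonormal (k := ℂ) (G := G) V V
  rw [if_pos ⟨CategoryTheory.Iso.refl V⟩] at horth
  have hterm : ∀ g : G, V.character g * V.character g⁻¹ =
      if g ∈ N then ((finrank ℂ V : ℂ)) ^ 2 else 0 := by
    intro g
    by_cases hg : g ∈ N
    · rw [if_pos hg, hcharN g hg, hcharN g⁻¹ (inv_mem hg),
        show (⟨g⁻¹, inv_mem hg⟩ : N) = (⟨g, hg⟩ : N)⁻¹ from rfl, map_inv]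
      have hu : ((ψ ⟨g, hg⟩ : ℂˣ) : ℂ) * (((ψ ⟨g, hg⟩)⁻¹ : ℂˣ) : ℂ) = 1 := by
        rw [← Units.val_mul, mul_inv_cancel, Units.val_one]
      calc ((ψ ⟨g, hg⟩ : ℂˣ) : ℂ) * (finrank ℂ V) *
            ((((ψ ⟨g, hg⟩)⁻¹ : ℂˣ) : ℂ) * (finrank ℂ V))
          = (((ψ ⟨g, hg⟩ : ℂˣ) : ℂ) * (((ψ ⟨g, hg⟩)⁻¹ : ℂˣ) : ℂ)) *
            ((finrank ℂ V) * (finrank ℂ V)) := by ring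
        _ = ((finrank ℂ V : ℂ)) ^ 2 := by rw [hu, one_mul, sq]
    · rw [if_neg hg, hvanish g hg, zero_mul]
  have hsum : ∑ g : G, V.character g * V.character g⁻¹ =
      (Nat.card N : ℂ) * ((finrank ℂ V : ℂ)) ^ 2 := by
    rw [Finset.sum_congr rfl fun g _ => hterm g, ← Finset.sum_filter, Finset.sum_const]
    rw [show ((Finset.univ.filter (· ∈ N)).card) = Nat.card N by
      rw [Nat.card_eq_fintype_card, Fintype.card_subtype]]
    simp [nsmul_eq_mul]
  have horth2 : ⅟((Fintype.card G : ℂ)) • ∑ g : G, V.character g * V.character g⁻¹ = 1 := by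
    rw [invOf_eq_inv, smul_eq_mul, ← Nat.card_eq_fintype_card]; simpa using horth
  rw [hsum] at horth2
  have h2 := congrArg (fun z : ℂ => ((Fintype.card G : ℂ)) * z) horth2
  simp only [smul_eq_mul, mul_one] at h2
  rw [← mul_assoc, mul_invOf_self, one_mul] at h2
  have hNat : Nat.card N * (finrank ℂ V) ^ 2 = Fintype.card G := by exact_mod_cast h2
  have hidx : Nat.card N * N.index = Fintype.card G := by
    rw [← Nat.card_eq_fintype_card]
    exact Subgroup.card_mul_index N
  have hd : (finrank ℂ V) ^ 2 = N.index :=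
    Nat.eq_of_mul_eq_mul_left Nat.card_pos (hNat.trans hidx.symm)
  exact ⟨hd, ⟨finrank ℂ V, by rw [← hd, sq]⟩⟩
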